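/- Let e₁, …, eₙ be pairwise commuting idempotent endomorphisms of an R-module M such that M = ∑_{i=1}^n im(e_i). Then ⋂_{i=1}^n ker(e_i) = 0. -/

import Mathlib

theorem stmt4 {R M : Type*} [CommRing R] [AddCommGroup M] [Module R M]
    {n : ℕ} (e : Fin n → Module.End R M)
    (hidem : ∀ i, e i * e i = e i)
    (hcomm : ∀ i j, Commute (e i) (e j))
    (hspan : (⨆ i, LinearMap.range (e i)) = ⊤) :
    (⨅ i, LinearMap.ker (e i)) = ⊥ := by
  classical
  set f : Fin n → Module.End R M := fun i => 1 - e i with hf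
  have hcomm' : ∀ i j, Commute (f i) (f j) := fun i j =>
    (((Commute.one_left (1 : Module.End R M)).sub_right
        ((Commute.one_left (e j)))).sub_left
      (((Commute.one_right (e i)).sub_right (hcomm i j))))
  have comm : ∀ s : Finset (Fin n), ∀ i ∈ s, ∀ j ∈ s, i ≠ j → Commute (f i) (f j) :=
    fun s i _ j _ _ => hcomm' i j
  set P : Module.End R M := Finset.noncommProd Finset.univ f (comm Finset.univ) with hP
  -- P kills each range
  have hPei : ∀ i, P * e i = 0 := by
    intro i
    have := Finset.noncommProd_erase_mul Finset.univ (Finset.mem_univ i) f (comm Finset.univ)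
    rw [hP, ← this, mul_assoc]
    have : f i * e i = 0 := by
      simp only [hf, sub_mul, one_mul, hidem i, sub_self]
    rw [this, mul_zero]
  -- hence P = 0
  have hP0 : P = 0 := by
    ext x
    have hx : x ∈ (⨆ i, LinearMap.range (e i)) := hspan ▸ Submodule.mem_top
    simp only [LinearMap.zero_apply]
    refine Submodule.iSup_induction _ (motive := fun y => P y = 0) hx ?_ (map_zero P) ?_
    · rintro i y ⟨z, rfl⟩
      have : P (e i z) = (P * e i) z := rfl
      rw [this, hPei i, LinearMap.zero_apply]
    · intro a b ha hb
      rw [map_add, ha, hb, add_zero]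
  -- P fixes elements of the kernel intersection
  ext x
  simp only [Submodule.mem_bot, Submodule.mem_iInf, LinearMap.mem_ker]
  constructor
  · intro hx
    have key : ∀ s : Finset (Fin n), (Finset.noncommProd s f (comm s)) x = x := by
      intro s
      induction s using Finset.induction with
      | empty => rfl
      | @insert a s ha ih =>
        rw [Finset.noncommProd_insert_of_notMem _ _ _ (comm (insert a s)) ha]
        have : f a x = x := by
          simp only [hf, LinearMap.sub_apply, Module.End.one_apply, hx a, sub_zero]
        calc (f a * Finset.noncommProd s f (comm s)) x
            = f a (Finset.noncommProd s f (comm s) x) := rfl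
          _ = f a x := by rw [ih]
          _ = x := this
    have := key Finset.univ
    rw [← hP, hP0] at this
    simpa using this.symm
  · rintro rfl i
    simp
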